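/- arXiv:2106.10994 — 4 statements merged into one kernel-verified Lean document; each statement's English description precedes it below -/
import Mathlib

section
/- Let L be an n×n real symmetric matrix such that both L and 2I − L are positive semidefinite (equivalently, the eigenvalues of L lie in [0,2]), let K ∈ ℕ, and let θ_0,…,θ_K be nonnegative reals. Then the BernNet operator ∑_{k=0}^{K} θ_k · 2^{−K} · C(K,k) · (2I − L)^{K−k} · L^k is a positive semidefinite matrix. -/
open Finset Matrix

lemma posSemidef_smul_nonneg {n : ℕ} {M : Matrix (Fin n) (Fin n) ℝ}
    (hM : M.PosSemidef) {c : ℝ} (hc : 0 ≤ c) : (c • M).PosSemidef := by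
  refine ⟨?_, fun x => ?_⟩
  · unfold Matrix.IsHermitian
    rw [conjTranspose_smul, hM.1]
    simp
  · exact (hM.smul hc).2 x

lemma posSemidef_sum {n : ℕ} {ι : Type*} (s : Finset ι)
    (f : ι → Matrix (Fin n) (Fin n) ℝ) (hf : ∀ i ∈ s, (f i).PosSemidef) :
    (∑ i ∈ s, f i).PosSemidef := by
  classical
  induction s using Finset.induction_on with
  | empty => simpa using Matrix.PosSemidef.zero
  | insert _ _ h ih =>
    rw [Finset.sum_insert h]
    exact (hf _ (Finset.mem_insert_self _ _)).add
      (ih fun i hi => hf i (Finset.mem_insert_of_mem hi))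

/-- If `L` is real symmetric with `L ⪰ 0` and `2I - L ⪰ 0` (eigenvalues in `[0,2]`), and the
coefficients `θ_k` are nonnegative, then the BernNet operator
`∑_{k=0}^K θ_k · 2^{-K} · C(K,k) · (2I - L)^{K-k} · L^k` is positive semidefinite. -/
theorem bernnet_posSemidef
    {n : ℕ} (L : Matrix (Fin n) (Fin n) ℝ)
    (hL : L.PosSemidef)
    (hL2 : (2 • (1 : Matrix (Fin n) (Fin n) ℝ) - L).PosSemidef)
    (K : ℕ) (θ : ℕ → ℝ) (hθ : ∀ k, 0 ≤ θ k) :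
    (∑ k ∈ Finset.range (K + 1),
        (θ k * ((2 : ℝ) ^ K)⁻¹ * (K.choose k : ℝ)) •
          ((2 • (1 : Matrix (Fin n) (Fin n) ℝ) - L) ^ (K - k) * L ^ k)).PosSemidef := by
  set A := 2 • (1 : Matrix (Fin n) (Fin n) ℝ) - L with hA
  open scoped MatrixOrder in
  set S := CFC.sqrt L with hS
  open scoped MatrixOrder in
  have hSsq : S ^ 2 = L := CFC.sq_sqrt L (Matrix.nonneg_iff_posSemidef.mpr hL)
  open scoped MatrixOrder in
  have hSherm : S.IsHermitian := (Matrix.nonneg_iff_posSemidef.mp (CFC.sqrt_nonneg L)).isHermitian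
  have hcomm : Commute S A := by
    rw [hA, ← hSsq]
    exact (Commute.smul_right (Commute.one_right S) 2).sub_right
      ((Commute.refl S).pow_right 2)
  apply _root_.posSemidef_sum
  intro k _
  apply posSemidef_smul_nonneg
  · have hterm : A ^ (K - k) * L ^ k = (S ^ k)ᴴ * A ^ (K - k) * S ^ k := by
      have hLe : L ^ k = S ^ k * S ^ k := by
        rw [← hSsq, ← pow_add, ← pow_mul]
        ring_nf
      have hcp := (hcomm.pow_pow k (K - k)).eq
      rw [hSherm.pow k, hLe, hcp, mul_assoc]
    rw [hterm]
    exact (hL2.pow (K - k)).conjTranspose_mul_mul_same (S ^ k)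
  · exact mul_nonneg (mul_nonneg (hθ k) (by positivity)) (Nat.cast_nonneg _)
end

section
/- Let p be a real polynomial satisfying p(x) > 0 for all x ∈ [0,1]. Then there exist K ∈ ℕ and nonnegative real coefficients θ_0,…,θ_K such that p(x) = ∑_{k=0}^{K} θ_k · C(K,k) · (1−x)^{K−k} · x^k for all x ∈ ℝ. That is, every polynomial strictly positive on [0,1] is a nonnegative linear combination of Bernstein basis polynomials of some degree K. -/
open Finset

lemma bern_elev (K i : ℕ) (hiK : i ≤ K) (x : ℝ) :
    ∑ k ∈ range (K+1), ((k.choose i : ℝ)/(K.choose i)) * (K.choose k) * (1-x)^(K-k) * x^k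
      = x^i := by
  have hKi : (0:ℝ) < K.choose i := by exact_mod_cast Nat.choose_pos hiK
  have key : ∀ k ∈ range (K+1),
      ((k.choose i : ℝ)/(K.choose i)) * (K.choose k) * (1-x)^(K-k) * x^k
        = (if i ≤ k then ((K-i).choose (k-i) : ℝ) * (1-x)^(K-k) * x^k else 0) := by
    intro k hk
    rw [mem_range] at hk
    by_cases h : i ≤ k
    · simp only [h, if_true]
      have := Nat.choose_mul (n := K) h
      have hcast : (K.choose k : ℝ) * (k.choose i) = (K.choose i) * ((K-i).choose (k-i)) := by
        exact_mod_cast congrArg (Nat.cast (R := ℝ)) this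
      have h2 : ((k.choose i : ℝ)/(K.choose i)) * (K.choose k) = ((K-i).choose (k-i) : ℝ) := by
        field_simp
        linear_combination hcast
      rw [h2]
    · push_neg at h
      simp [Nat.choose_eq_zero_of_lt h, h.not_ge]
  rw [Finset.sum_congr rfl key]
  rw [← Finset.sum_filter]
  have hfil : (range (K+1)).filter (fun k => i ≤ k) = Finset.Ico i (K+1) := by
    ext k; simp [Nat.lt_succ_iff, and_comm]
  rw [hfil, Finset.sum_Ico_eq_sum_range]
  have : ∀ m ∈ range (K + 1 - i),
      ((K-i).choose (i + m - i) : ℝ) * (1-x)^(K-(i+m)) * x^(i+m)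
        = x^i * (x^m * (1-x)^(K-i-m) * ((K-i).choose m)) := by
    intro m hm
    rw [mem_range] at hm
    have h1 : i + m - i = m := by omega
    have h2 : K - (i + m) = K - i - m := by omega
    rw [h1, h2, pow_add]; ring
  rw [Finset.sum_congr rfl this, ← Finset.mul_sum]
  have hrange : K + 1 - i = (K - i) + 1 := by omega
  rw [hrange, ← add_pow x (1-x) (K-i)]
  simp

lemma prod_diff_bound (s : Finset ℕ) (f g : ℕ → ℝ) (ε : ℝ) (hε : 0 ≤ ε)
    (hf : ∀ j ∈ s, 0 ≤ f j ∧ f j ≤ 1) (hg : ∀ j ∈ s, 0 ≤ g j ∧ g j ≤ 1)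
    (hd : ∀ j ∈ s, |f j - g j| ≤ ε) :
    |∏ j ∈ s, f j - ∏ j ∈ s, g j| ≤ s.card * ε := by
  induction s using Finset.cons_induction with
  | empty => simp
  | cons a s ha ih =>
    simp only [Finset.prod_cons, Finset.card_cons]
    have hfs : ∀ j ∈ s, 0 ≤ f j ∧ f j ≤ 1 := fun j hj => hf j (Finset.mem_cons_of_mem hj)
    have hgs : ∀ j ∈ s, 0 ≤ g j ∧ g j ≤ 1 := fun j hj => hg j (Finset.mem_cons_of_mem hj)
    have hds : ∀ j ∈ s, |f j - g j| ≤ ε := fun j hj => hd j (Finset.mem_cons_of_mem hj)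
    have ih' := ih hfs hgs hds
    have hfa := hf a (Finset.mem_cons_self a s)
    have hga := hg a (Finset.mem_cons_self a s)
    have hda := hd a (Finset.mem_cons_self a s)
    have hPg0 : 0 ≤ ∏ j ∈ s, g j := Finset.prod_nonneg (fun j hj => (hgs j hj).1)
    have hPg1 : ∏ j ∈ s, g j ≤ 1 := Finset.prod_le_one (fun j hj => (hgs j hj).1) (fun j hj => (hgs j hj).2)
    have key : f a * ∏ j ∈ s, f j - g a * ∏ j ∈ s, g j
        = f a * (∏ j ∈ s, f j - ∏ j ∈ s, g j) + (f a - g a) * ∏ j ∈ s, g j := by ring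
    rw [key]
    calc |f a * (∏ j ∈ s, f j - ∏ j ∈ s, g j) + (f a - g a) * ∏ j ∈ s, g j|
        ≤ |f a * (∏ j ∈ s, f j - ∏ j ∈ s, g j)| + |(f a - g a) * ∏ j ∈ s, g j| := abs_add_le _ _
      _ ≤ 1 * (s.card * ε) + ε * 1 := by
          rw [abs_mul, abs_mul]
          gcongr
          · rw [abs_of_nonneg hfa.1]; exact hfa.2
          · rw [abs_of_nonneg hPg0]; exact hPg1
      _ ≤ ((s.card : ℝ) + 1) * ε := by ring_nf; nlinarith
      _ = ((s.card + 1 : ℕ) : ℝ) * ε := by push_cast; ring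

lemma ratio_bound (n K i k : ℕ) (hin : i ≤ n) (hnK : n < K) (hk : k ≤ K) :
    |(k.choose i : ℝ)/(K.choose i) - ((k:ℝ)/K)^i| ≤ (n:ℝ)^2/((K:ℝ)-n) := by
  have hK0 : (0:ℝ) < K := by
    have : 0 < K := by omega
    exact_mod_cast this
  have hKn : (0:ℝ) < (K:ℝ) - n := by
    have : (n:ℝ) < K := by exact_mod_cast hnK
    linarith
  by_cases hik : i ≤ k
  · -- rewrite ratio as product
    have hdesc : ∀ m : ℕ, i ≤ m → (m.descFactorial i : ℝ) = ∏ j ∈ range i, ((m:ℝ) - j) := by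
      intro m him
      rw [Nat.descFactorial_eq_prod_range, Nat.cast_prod]
      exact Finset.prod_congr rfl (fun j hj => by
        rw [mem_range] at hj
        have : j ≤ m := le_trans (le_of_lt hj) him
        push_cast [Nat.cast_sub this]
        ring)
    have hKdpos : (0:ℝ) < ∏ j ∈ range i, ((K:ℝ) - j) := by
      apply Finset.prod_pos
      intro j hj
      rw [mem_range] at hj
      have : (j:ℝ) < K := by
        have : j < K := by omega
        exact_mod_cast this
      linarith
    have hratio : (k.choose i : ℝ)/(K.choose i)
        = ∏ j ∈ range i, (((k:ℝ) - j)/((K:ℝ) - j)) := by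
      have h1 : (k.descFactorial i : ℝ) = (i.factorial : ℝ) * (k.choose i) := by
        exact_mod_cast congrArg (Nat.cast (R := ℝ)) (Nat.descFactorial_eq_factorial_mul_choose k i)
      have h2 : (K.descFactorial i : ℝ) = (i.factorial : ℝ) * (K.choose i) := by
        exact_mod_cast congrArg (Nat.cast (R := ℝ)) (Nat.descFactorial_eq_factorial_mul_choose K i)
      have hKc : (0:ℝ) < K.choose i := by exact_mod_cast Nat.choose_pos (by omega : i ≤ K)
      have hfac : (0:ℝ) < i.factorial := by exact_mod_cast i.factorial_pos
      rw [Finset.prod_div_distrib, ← hdesc k hik, ← hdesc K (by omega), h1, h2]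
      field_simp
    rw [hratio]
    have hgprod : ((k:ℝ)/K)^i = ∏ _j ∈ range i, ((k:ℝ)/K) := by
      rw [Finset.prod_const, card_range]
    rw [hgprod]
    have hbound := prod_diff_bound (range i) (fun j => ((k:ℝ) - j)/((K:ℝ) - j))
      (fun _ => (k:ℝ)/K) ((n:ℝ)/((K:ℝ)-n)) (by positivity) ?_ ?_ ?_
    · refine le_trans hbound ?_
      rw [card_range]
      rw [div_pow] at *
      have : (i:ℝ) ≤ n := by exact_mod_cast hin
      rw [sq]
      rw [mul_div_assoc]
      gcongr
    · intro j hj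
      rw [mem_range] at hj
      have hjk : (j:ℝ) ≤ k := by
        have : j ≤ k := by omega
        exact_mod_cast this
      have hjK : (j:ℝ) < K := by
        have : j < K := by omega
        exact_mod_cast this
      have hkK : (k:ℝ) ≤ K := by exact_mod_cast hk
      constructor
      · apply div_nonneg <;> linarith
      · rw [div_le_one (by linarith)]; linarith
    · intro j hj
      constructor
      · positivity
      · rw [div_le_one hK0]; exact_mod_cast hk
    · intro j hj
      rw [mem_range] at hj
      have hjn : (j:ℝ) < n := by
        have : j < n := by omega
        exact_mod_cast this
      have hjK : (j:ℝ) < K := by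
        have : j < K := by omega
        exact_mod_cast this
      have hkK : (k:ℝ) ≤ K := by exact_mod_cast hk
      have hjk : (j:ℝ) ≤ k := by
        have : j ≤ k := by omega
        exact_mod_cast this
      have hd1 : ((K:ℝ) - j) ≠ 0 := by linarith
      have hd2 : (K:ℝ) ≠ 0 := ne_of_gt hK0
      have heq : ((k:ℝ) - j)/((K:ℝ) - j) - (k:ℝ)/K
          = -(j * ((K:ℝ) - k)) / (((K:ℝ) - j) * K) := by
        field_simp
        ring
      rw [heq, abs_div, abs_neg]
      rw [abs_of_nonneg (mul_nonneg (by positivity) (by linarith) : (0:ℝ) ≤ (j:ℝ) * ((K:ℝ)-k)),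
        abs_of_pos (mul_pos (by linarith) hK0 : (0:ℝ) < ((K:ℝ)-j)*K)]
      rw [div_le_div_iff₀ (mul_pos (by linarith) hK0) hKn]
      have a1 : (j:ℝ)*((K:ℝ)-k) ≤ (j:ℝ)*K := by nlinarith
      have b1 : (j:ℝ)*((K:ℝ)-k)*((K:ℝ)-n) ≤ (j:ℝ)*K*((K:ℝ)-j) :=
        mul_le_mul a1 (by linarith) (by linarith) (by positivity)
      have b2 : (j:ℝ)*K*((K:ℝ)-j) ≤ (n:ℝ)*K*((K:ℝ)-j) := by
        apply mul_le_mul_of_nonneg_right _ (by linarith)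
        apply mul_le_mul_of_nonneg_right hjn.le hK0.le
      nlinarith [b1, b2]
  · push_neg at hik
    have hi1 : 1 ≤ i := by omega
    have hn1 : (1:ℝ) ≤ n := by
      have : 1 ≤ n := by omega
      exact_mod_cast this
    rw [Nat.choose_eq_zero_of_lt hik]
    simp only [Nat.cast_zero, zero_div, zero_sub, abs_neg]
    have h01 : (0:ℝ) ≤ (k:ℝ)/K := by positivity
    have h11 : (k:ℝ)/K ≤ 1 := by
      rw [div_le_one hK0]; exact_mod_cast hk
    rw [abs_of_nonneg (by positivity)]
    calc ((k:ℝ)/K)^i ≤ ((k:ℝ)/K)^1 := pow_le_pow_of_le_one h01 h11 hi1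
      _ = (k:ℝ)/K := pow_one _
      _ ≤ (n:ℝ)/((K:ℝ)-n) := by
          apply div_le_div₀ (by positivity) ?_ hKn (by linarith)
          have : (k:ℝ) < n := by
            have : k < n := by omega
            exact_mod_cast this
          linarith
      _ ≤ (n:ℝ)^2/((K:ℝ)-n) := by
          gcongr
          nlinarith

/-- Every real polynomial strictly positive on `[0,1]` is a nonnegative linear combination
of Bernstein basis polynomials of some degree `K`:
`p(x) = ∑_{k=0}^K θ_k · C(K,k) · (1-x)^{K-k} · x^k` with all `θ_k ≥ 0`. -/
theorem positive_polynomial_nonneg_bernstein_combination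
    (p : Polynomial ℝ) (hp : ∀ x ∈ Set.Icc (0:ℝ) 1, 0 < p.eval x) :
    ∃ (K : ℕ) (θ : ℕ → ℝ), (∀ k, 0 ≤ θ k) ∧
      ∀ x : ℝ, p.eval x =
        ∑ k ∈ Finset.range (K + 1),
          θ k * (K.choose k : ℝ) * (1 - x) ^ (K - k) * x ^ k := by
  set n := p.natDegree with hn
  obtain ⟨x0, hx0, hmin⟩ := isCompact_Icc.exists_isMinOn (Set.nonempty_Icc.mpr zero_le_one)
    (Polynomial.continuous p).continuousOn
  set δ := p.eval x0 with hδdef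
  have hδ : 0 < δ := hp x0 hx0
  have hmin' : ∀ y ∈ Set.Icc (0:ℝ) 1, δ ≤ p.eval y := fun y hy => isMinOn_iff.mp hmin y hy
  set A := ∑ i ∈ range (n+1), |p.coeff i| with hA
  have hA0 : 0 ≤ A := Finset.sum_nonneg (fun i _ => abs_nonneg _)
  obtain ⟨M, hM⟩ := exists_nat_gt (A * (n:ℝ)^2 / δ)
  have hM0R : (0:ℝ) < M := lt_of_le_of_lt (by positivity) hM
  have hM0 : 0 < M := by exact_mod_cast hM0R
  set K := n + M with hK
  have hnK : n < K := by omega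
  have hnKR : ((K:ℝ) - n) = (M:ℝ) := by rw [hK]; push_cast; ring
  have hKnpos : (0:ℝ) < (K:ℝ) - n := by rw [hnKR]; exact hM0R
  have hK0 : (0:ℝ) < K := by
    have : 0 < K := by omega
    exact_mod_cast this
  have herr : A * ((n:ℝ)^2 / ((K:ℝ)-n)) < δ := by
    rw [hnKR, ← mul_div_assoc, div_lt_iff₀ hM0R]
    have := (div_lt_iff₀ hδ).mp hM
    nlinarith
  refine ⟨K, fun k => if k ≤ K then
    ∑ i ∈ range (n+1), p.coeff i * ((k.choose i : ℝ)/(K.choose i)) else 0, ?_, ?_⟩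
  · intro k
    by_cases hk : k ≤ K
    · simp only [hk, if_true]
      have hx : (k:ℝ)/K ∈ Set.Icc (0:ℝ) 1 := by
        constructor
        · positivity
        · rw [div_le_one hK0]; exact_mod_cast hk
      have hev : p.eval ((k:ℝ)/K) = ∑ i ∈ range (n+1), p.coeff i * ((k:ℝ)/K)^i :=
        Polynomial.eval_eq_sum_range _
      have hdiff : |(∑ i ∈ range (n+1), p.coeff i * ((k.choose i : ℝ)/(K.choose i)))
          - ∑ i ∈ range (n+1), p.coeff i * ((k:ℝ)/K)^i| ≤ A * ((n:ℝ)^2 / ((K:ℝ)-n)) := by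
        rw [← Finset.sum_sub_distrib]
        calc |∑ i ∈ range (n+1), (p.coeff i * ((k.choose i : ℝ)/(K.choose i))
                - p.coeff i * ((k:ℝ)/K)^i)|
            ≤ ∑ i ∈ range (n+1), |p.coeff i * ((k.choose i : ℝ)/(K.choose i))
                - p.coeff i * ((k:ℝ)/K)^i| := Finset.abs_sum_le_sum_abs _ _
          _ ≤ ∑ i ∈ range (n+1), |p.coeff i| * ((n:ℝ)^2 / ((K:ℝ)-n)) := by
              apply Finset.sum_le_sum
              intro i hi
              rw [mem_range, Nat.lt_succ_iff] at hi
              rw [← mul_sub, abs_mul]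
              exact mul_le_mul_of_nonneg_left (ratio_bound n K i k hi hnK hk) (abs_nonneg _)
          _ = A * ((n:ℝ)^2 / ((K:ℝ)-n)) := by rw [← Finset.sum_mul]
      have h1 := (abs_le.mp hdiff).1
      have h2 := hmin' _ hx
      rw [hev] at h2
      linarith
    · simp [hk]
  · intro x
    have step1 : ∀ k ∈ range (K+1),
        (if k ≤ K then ∑ i ∈ range (n+1), p.coeff i * ((k.choose i : ℝ)/(K.choose i)) else 0)
            * (K.choose k : ℝ) * (1 - x) ^ (K - k) * x ^ k
          = ∑ i ∈ range (n+1), p.coeff i *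
              (((k.choose i : ℝ)/(K.choose i)) * (K.choose k : ℝ) * (1 - x) ^ (K - k) * x ^ k) := by
      intro k hk
      rw [mem_range, Nat.lt_succ_iff] at hk
      rw [if_pos hk, Finset.sum_mul, Finset.sum_mul, Finset.sum_mul]
      exact Finset.sum_congr rfl (fun i _ => by ring)
    rw [Finset.sum_congr rfl step1, Finset.sum_comm]
    have step2 : ∀ i ∈ range (n+1),
        (∑ k ∈ range (K+1), p.coeff i *
            (((k.choose i : ℝ)/(K.choose i)) * (K.choose k : ℝ) * (1 - x) ^ (K - k) * x ^ k))
          = p.coeff i * x ^ i := by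
      intro i hi
      rw [mem_range, Nat.lt_succ_iff] at hi
      rw [← Finset.mul_sum, bern_elev K i (le_trans hi (le_of_lt hnK)) x]
    rw [Finset.sum_congr rfl step2]
    exact Polynomial.eval_eq_sum_range _
end

section
/- Let g be a real polynomial satisfying g(λ) > 0 for all λ ∈ [0,2]. Then there exist K ∈ ℕ and nonnegative real coefficients θ_0,…,θ_K such that g(λ) = ∑_{k=0}^{K} θ_k · 2^{−K} · C(K,k) · (2−λ)^{K−k} · λ^k for all λ ∈ ℝ. That is, every polynomial filter strictly positive on the spectral interval [0,2] can be expressed in BernNet form with nonnegative coefficients. -/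
open Finset Polynomial

private lemma S0 (m : ℕ) (t : ℝ) :
    ∑ k ∈ range (m+1), (m.choose k : ℝ) * t^k * (1-t)^(m-k) = 1 := by
  have h : ∑ k ∈ range (m+1), (m.choose k : ℝ) * t^k * (1-t)^(m-k)
      = ∑ k ∈ range (m+1), t^k * (1-t)^(m-k) * (m.choose k : ℝ) :=
    Finset.sum_congr rfl fun k _ => by ring
  rw [h, ← add_pow]
  simp

private lemma S1 (m : ℕ) (t : ℝ) :
    ∑ k ∈ range (m+1), (k : ℝ) * ((m.choose k : ℝ) * t^k * (1-t)^(m-k)) = m * t := by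
  have h := congrArg (Polynomial.eval t) (bernsteinPolynomial.sum_smul ℝ m)
  simp only [Polynomial.eval_finset_sum, bernsteinPolynomial, eval_smul, eval_mul, eval_pow,
    eval_natCast, eval_X, eval_sub, eval_one, smul_eq_mul, nsmul_eq_mul] at h
  rw [← h]

private lemma S2 (m : ℕ) (t : ℝ) :
    ∑ k ∈ range (m+1), (k : ℝ) * ((k:ℝ) - 1) * ((m.choose k : ℝ) * t^k * (1-t)^(m-k))
      = m * ((m:ℝ)-1) * t^2 := by
  have h := congrArg (Polynomial.eval t) (bernsteinPolynomial.sum_mul_smul ℝ m)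
  simp only [Polynomial.eval_finset_sum, bernsteinPolynomial, eval_smul, eval_mul, eval_pow,
    eval_natCast, eval_X, eval_sub, eval_one, smul_eq_mul, nsmul_eq_mul] at h
  have e : (m:ℝ) * ((m:ℝ)-1) * t^2 = ((m * (m-1) : ℕ) : ℝ) * t^2 := by
    cases m with
    | zero => simp
    | succ n => push_cast [Nat.succ_sub_one]; ring
  rw [e, ← h]
  refine Finset.sum_congr rfl fun k _ => ?_
  cases k with
  | zero => simp
  | succ n => push_cast [Nat.succ_sub_one]; ring

private def BP (p : Polynomial ℝ) : Prop :=
  ∃ (K : ℕ) (θ : ℕ → ℝ), (∀ k, 0 ≤ θ k) ∧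
    ∀ t : ℝ, p.eval t = ∑ k ∈ range (K + 1), θ k * t ^ k * (1 - t) ^ (K - k)

private lemma BP_quad (a b : ℝ) (hb : b ≠ 0) : BP ((X - C a) ^ 2 + C (b ^ 2)) := by
  obtain ⟨N, hN⟩ := exists_nat_ge (1 / b ^ 2)
  have hb2 : 0 < b ^ 2 := by positivity
  have hN1 : 1 ≤ b ^ 2 * ((N : ℝ) + 1) := by
    rw [div_le_iff₀ hb2] at hN
    nlinarith [hb2]
  set m := N + 2 with hm
  have hmr : (0:ℝ) < (m:ℝ) := by positivity
  refine ⟨m, fun k => (m.choose k : ℝ) *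
      ((a^2 + b^2) - 2*a*(k/(m:ℝ)) + (k*((k:ℝ)-1))/((m:ℝ)*((N:ℝ)+1))), fun k => ?_, fun t => ?_⟩
  · rcases le_or_gt k m with hk | hk
    · have hkr : (k:ℝ) ≤ (m:ℝ) := by exact_mod_cast hk
      have hk0 : (0:ℝ) ≤ (k:ℝ) := Nat.cast_nonneg k
      have hNr : (0:ℝ) < (N:ℝ) + 1 := by positivity
      refine mul_nonneg (Nat.cast_nonneg _) ?_
      have key : (a^2 + b^2) - 2*a*((k:ℝ)/(m:ℝ)) + ((k:ℝ)*((k:ℝ)-1))/((m:ℝ)*((N:ℝ)+1))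
          = ((a*(m:ℝ) - k)^2 * ((N:ℝ)+1) + b^2*(m:ℝ)^2*((N:ℝ)+1) - (k:ℝ)*((m:ℝ)-(k:ℝ)))
            / ((m:ℝ)^2 * ((N:ℝ)+1)) := by
        field_simp
        ring_nf
        rw [hm]; push_cast; ring
      rw [key]
      apply div_nonneg _ (by positivity)
      nlinarith [sq_nonneg (a*(m:ℝ) - k), sq_nonneg (2*(k:ℝ) - (m:ℝ)), sq_nonneg ((k:ℝ)-(m:ℝ))]
    · have : m.choose k = 0 := Nat.choose_eq_zero_of_lt hk
      simp [this]
  · have hsplit : ∀ k ∈ range (m+1),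
        (m.choose k : ℝ) * ((a^2 + b^2) - 2*a*((k:ℝ)/(m:ℝ)) + ((k:ℝ)*((k:ℝ)-1))/((m:ℝ)*((N:ℝ)+1)))
          * t^k * (1-t)^(m-k)
        = (a^2+b^2) * ((m.choose k : ℝ) * t^k * (1-t)^(m-k))
          - (2*a/(m:ℝ)) * ((k:ℝ) * ((m.choose k : ℝ) * t^k * (1-t)^(m-k)))
          + (1/((m:ℝ)*((N:ℝ)+1))) * ((k:ℝ)*((k:ℝ)-1) * ((m.choose k : ℝ) * t^k * (1-t)^(m-k))) := by
      intro k _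
      field_simp
    rw [Finset.sum_congr rfl hsplit]
    rw [Finset.sum_add_distrib, Finset.sum_sub_distrib, ← Finset.mul_sum, ← Finset.mul_sum,
      ← Finset.mul_sum, S0, S1, S2]
    have hm1 : ((m:ℝ) - 1) = (N:ℝ) + 1 := by rw [hm]; push_cast; ring
    simp only [eval_add, eval_pow, eval_sub, eval_X, eval_C, hm1]
    field_simp
    ring


private lemma BP_const {c : ℝ} (hc : 0 ≤ c) : BP (C c) := by
  refine ⟨0, fun _ => c, fun _ => hc, fun t => by simp⟩

private lemma BP_lin_neg {r : ℝ} (hr : r < 0) : BP (X - C r) := by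
  refine ⟨1, fun k => if k = 0 then -r else 1 - r, fun k => ?_, fun t => ?_⟩
  · simp only []; split <;> nlinarith
  · simp [Finset.sum_range_succ]; ring
private lemma BP_lin_pos {r : ℝ} (hr : 1 < r) : BP (C r - X) := by
  refine ⟨1, fun k => if k = 0 then r else r - 1, fun k => ?_, fun t => ?_⟩
  · simp only []; split <;> nlinarith
  · simp [Finset.sum_range_succ]; ring


private lemma BP_mul {p q : Polynomial ℝ} (hp : BP p) (hq : BP q) : BP (p * q) := by
  obtain ⟨K, θ, hθ, hpe⟩ := hp
  obtain ⟨L, φ, hφ, hqe⟩ := hq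
  refine ⟨K + L, fun n => ∑ i ∈ range (K+1), ∑ j ∈ range (L+1),
    if i + j = n then θ i * φ j else 0, fun n => ?_, fun t => ?_⟩
  · exact Finset.sum_nonneg fun i _ => Finset.sum_nonneg fun j _ => by
      split
      · exact mul_nonneg (hθ i) (hφ j)
      · exact le_refl 0
  · rw [eval_mul, hpe t, hqe t, Finset.sum_mul_sum]
    have step : ∀ i ∈ range (K+1), ∀ j ∈ range (L+1),
        (θ i * t ^ i * (1-t)^(K-i)) * (φ j * t ^ j * (1-t)^(L-j))
        = ∑ n ∈ range (K+L+1), (if i + j = n then θ i * φ j else 0) * t ^ n * (1-t)^(K+L-n) := by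
      intro i hi j hj
      simp only [Finset.mem_range] at hi hj
      rw [Finset.sum_eq_single (i+j)]
      · have h1 : K + L - (i+j) = (K-i)+(L-j) := by omega
        rw [if_pos rfl, h1, pow_add, pow_add]; ring
      · intro n _ hn
        rw [if_neg (fun h => hn h.symm), zero_mul, zero_mul]
      · intro h; exact absurd (Finset.mem_range.mpr (by omega)) h
    rw [Finset.sum_congr rfl fun i hi => Finset.sum_congr rfl fun j hj => step i hi j hj]
    rw [Finset.sum_congr rfl fun i (_ : i ∈ range (K+1)) => Finset.sum_comm]
    rw [Finset.sum_comm]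
    simp only [Finset.sum_mul]

private lemma quad_factor (f : Polynomial ℝ) (h1 : 1 ≤ f.natDegree)
    (hroot : ∀ r : ℝ, f.eval r ≠ 0) :
    ∃ (a b : ℝ) (w : Polynomial ℝ), b ≠ 0 ∧ f = ((X - C a) ^ 2 + C (b ^ 2)) * w := by
  set F := f.map (algebraMap ℝ ℂ) with hF
  have hdegF : 0 < F.degree := by
    rw [hF, degree_map_eq_of_injective (algebraMap ℝ ℂ).injective]
    exact natDegree_pos_iff_degree_pos.mp h1
  obtain ⟨z, hz⟩ := Complex.exists_root hdegF
  have hz0 : F.eval z = 0 := hz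
  have him : z.im ≠ 0 := by
    intro h0
    apply hroot z.re
    have h2 : F.eval ((algebraMap ℝ ℂ) z.re) = (algebraMap ℝ ℂ) (f.eval z.re) := by
      rw [hF, eval_map, eval₂_at_apply]
    have hz' : ((algebraMap ℝ ℂ) z.re) = z := by
      apply Complex.ext <;> simp [h0]
    rw [hz', hz0] at h2
    have h3 : ((f.eval z.re : ℝ) : ℂ) = 0 := h2.symm
    exact_mod_cast h3
  set Q : Polynomial ℝ := (X - C z.re) ^ 2 + C (z.im ^ 2) with hQ
  have hd2 : (((X : Polynomial ℝ) - C z.re) ^ 2).degree = 2 := by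
    rw [degree_pow, degree_X_sub_C]; rfl
  have hQmonic : Q.Monic := by
    refine ((monic_X_sub_C z.re).pow 2).add_of_left ?_
    rw [hd2]
    exact lt_of_le_of_lt degree_C_le (by norm_num)
  have hQdeg : Q.degree = 2 := by
    rw [hQ, degree_add_eq_left_of_degree_lt, hd2]
    rw [hd2]
    exact lt_of_le_of_lt degree_C_le (by norm_num)
  have hQz : (Q.map (algebraMap ℝ ℂ)).eval z = 0 := by
    have hzz : z - (z.re : ℂ) = z.im * Complex.I := by
      apply Complex.ext <;> simp
    simp only [hQ, Polynomial.map_add, Polynomial.map_pow, Polynomial.map_sub, map_X, map_C,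
      eval_add, eval_pow, eval_sub, eval_X, eval_C, Complex.coe_algebraMap]
    push_cast
    rw [hzz]
    ring_nf
    simp [Complex.I_sq]
  have hmod := modByMonic_add_div f Q
  set r := f %ₘ Q with hr
  have hrdeg : r.degree ≤ 1 := by
    have h := degree_modByMonic_lt f hQmonic
    rw [hQdeg] at h
    rcases eq_or_ne r 0 with h0 | h0
    · simp [h0]
    · rw [degree_eq_natDegree h0] at h ⊢
      exact_mod_cast Nat.lt_succ_iff.mp (by exact_mod_cast h)
  have hrform := eq_X_add_C_of_degree_le_one hrdeg
  have hrz : (r.map (algebraMap ℝ ℂ)).eval z = 0 := by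
    have := congrArg (fun p => (p.map (algebraMap ℝ ℂ)).eval z) hmod
    simp only [Polynomial.map_add, Polynomial.map_mul, eval_add, eval_mul, hQz, zero_mul,
      add_zero, mul_zero, zero_add] at this
    rw [this, ← hF, hz0]
  rw [hrform] at hrz
  simp only [Polynomial.map_add, Polynomial.map_mul, map_C, map_X, eval_add, eval_mul,
    eval_C, eval_X] at hrz
  have him' : (r.coeff 1 : ℂ) * z + (r.coeff 0 : ℂ) = 0 := hrz
  have hc1 : r.coeff 1 = 0 := by
    have := congrArg Complex.im him'
    simp at this
    rcases this with h | h
    · exact h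
    · exact absurd h him
  have hc0 : r.coeff 0 = 0 := by
    have := congrArg Complex.re him'
    simp [hc1] at this
    exact this
  have hr0 : r = 0 := by rw [hrform, hc1, hc0]; simp
  rw [hr0, zero_add] at hmod
  exact ⟨z.re, z.im, f /ₘ Q, him, hmod.symm⟩

private lemma BP_of_pos : ∀ (n : ℕ) (f : Polynomial ℝ), f.natDegree ≤ n →
    (∀ t ∈ Set.Icc (0:ℝ) 1, 0 < f.eval t) → BP f := by
  intro n
  induction n with
  | zero =>
    intro f hdeg hpos
    have h0 : f = C (f.coeff 0) := eq_C_of_natDegree_eq_zero (Nat.le_zero.mp hdeg)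
    have : 0 < f.coeff 0 := by
      have := hpos 0 ⟨le_refl _, zero_le_one⟩
      rwa [coeff_zero_eq_eval_zero]
    rw [h0]; exact BP_const this.le
  | succ n IH =>
    intro f hdeg hpos
    by_cases hd0 : f.natDegree = 0
    · have h0 : f = C (f.coeff 0) := eq_C_of_natDegree_eq_zero hd0
      have : 0 < f.coeff 0 := by
        have := hpos 0 ⟨le_refl _, zero_le_one⟩
        rwa [coeff_zero_eq_eval_zero]
      rw [h0]; exact BP_const this.le
    · have h1 : 1 ≤ f.natDegree := Nat.one_le_iff_ne_zero.mpr hd0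
      by_cases hroot : ∃ r : ℝ, f.eval r = 0
      · obtain ⟨r, hr⟩ := hroot
        have hr01 : r < 0 ∨ 1 < r := by
          by_contra h
          push_neg at h
          exact (hpos r ⟨h.1, h.2⟩).ne' hr
        have hq : (X - C r) * (f /ₘ (X - C r)) = f := mul_divByMonic_eq_iff_isRoot.mpr hr
        set q := f /ₘ (X - C r) with hqdef
        have hqdeg : q.natDegree ≤ n := by
          rw [hqdef, natDegree_divByMonic f (monic_X_sub_C r), natDegree_X_sub_C]
          omega
        rcases hr01 with hrneg | hrpos
        · have hqpos : ∀ t ∈ Set.Icc (0:ℝ) 1, 0 < q.eval t := by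
            intro t ht
            have hf := hpos t ht
            rw [← hq, eval_mul, eval_sub, eval_X, eval_C] at hf
            by_contra hle
            push_neg at hle
            nlinarith [ht.1]
          have := BP_mul (BP_lin_neg hrneg) (IH q hqdeg hqpos)
          rwa [hq] at this
        · have hq' : (C r - X) * (-q) = f := by rw [← hq]; ring
          have hqpos : ∀ t ∈ Set.Icc (0:ℝ) 1, 0 < (-q).eval t := by
            intro t ht
            have hf := hpos t ht
            rw [← hq', eval_mul, eval_sub, eval_X, eval_C, eval_neg] at hf
            by_contra hle
            push_neg at hle
            rw [eval_neg] at hle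
            nlinarith [ht.2]
          have hqdeg' : (-q).natDegree ≤ n := by rwa [natDegree_neg]
          have := BP_mul (BP_lin_pos hrpos) (IH (-q) hqdeg' hqpos)
          rwa [hq'] at this
      · push_neg at hroot
        obtain ⟨a, b, w, hb, hfw⟩ := quad_factor f h1 hroot
        have hQpos : ∀ t : ℝ, 0 < (((X : Polynomial ℝ) - C a) ^ 2 + C (b ^ 2)).eval t := by
          intro t
          simp only [eval_add, eval_pow, eval_sub, eval_X, eval_C]
          positivity
        have hwpos : ∀ t ∈ Set.Icc (0:ℝ) 1, 0 < w.eval t := by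
          intro t ht
          have hf := hpos t ht
          rw [hfw, eval_mul] at hf
          by_contra hle
          push_neg at hle
          nlinarith [hQpos t]
        have hw0 : w ≠ 0 := by
          intro h0
          have := hwpos 0 ⟨le_refl _, zero_le_one⟩
          rw [h0] at this; simp at this
        have hQ0 : ((X : Polynomial ℝ) - C a) ^ 2 + C (b ^ 2) ≠ 0 := fun h0 => by
          have := hQpos 0; rw [h0] at this; simp at this
        have hQnd : (((X : Polynomial ℝ) - C a) ^ 2 + C (b ^ 2)).natDegree = 2 := by
          have hd2 : (((X : Polynomial ℝ) - C a) ^ 2).degree = 2 := by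
            rw [degree_pow, degree_X_sub_C]; rfl
          have : (((X : Polynomial ℝ) - C a) ^ 2 + C (b ^ 2)).degree = 2 := by
            rw [degree_add_eq_left_of_degree_lt, hd2]
            rw [hd2]
            exact lt_of_le_of_lt degree_C_le (by norm_num)
          exact natDegree_eq_of_degree_eq_some this
        have hwdeg : w.natDegree ≤ n := by
          have := natDegree_mul hQ0 hw0
          rw [← hfw, hQnd] at this
          omega
        have := BP_mul (BP_quad a b hb) (IH w hwdeg hwpos)
        rwa [← hfw] at this

/-- Every real polynomial filter strictly positive on `[0,2]` can be written in BernNet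
form with nonnegative coefficients:
`g(λ) = ∑_{k=0}^K θ_k · 2^{-K} · C(K,k) · (2-λ)^{K-k} · λ^k` with all `θ_k ≥ 0`. -/
theorem positive_polynomial_filter_bernnet_form
    (g : Polynomial ℝ) (hg : ∀ lam ∈ Set.Icc (0:ℝ) 2, 0 < g.eval lam) :
    ∃ (K : ℕ) (θ : ℕ → ℝ), (∀ k, 0 ≤ θ k) ∧
      ∀ lam : ℝ, g.eval lam =
        ∑ k ∈ Finset.range (K + 1),
          θ k * ((2 : ℝ) ^ K)⁻¹ * (K.choose k : ℝ) * (2 - lam) ^ (K - k) * lam ^ k := by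
  set f := g.comp (C 2 * X) with hf
  have hfe : ∀ t : ℝ, f.eval t = g.eval (2 * t) := by
    intro t; rw [hf, eval_comp, eval_mul, eval_C, eval_X]
  have hfpos : ∀ t ∈ Set.Icc (0:ℝ) 1, 0 < f.eval t := by
    intro t ht
    rw [hfe]
    exact hg (2*t) ⟨by linarith [ht.1], by linarith [ht.2]⟩
  obtain ⟨K, θ, hθ, hsum⟩ := BP_of_pos f.natDegree f le_rfl hfpos
  refine ⟨K, fun k => if k ≤ K then θ k / (K.choose k : ℝ) else 0, fun k => ?_, fun lam => ?_⟩
  · simp only []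
    split
    · exact div_nonneg (hθ k) (Nat.cast_nonneg _)
    · exact le_refl 0
  · have h2 : g.eval lam = f.eval (lam / 2) := by
      rw [hfe]
      ring_nf

    rw [h2, hsum]
    refine Finset.sum_congr rfl fun k hk => ?_
    rw [Finset.mem_range] at hk
    have hkK : k ≤ K := by omega
    have hch : (0:ℝ) < (K.choose k : ℝ) := by exact_mod_cast Nat.choose_pos hkK
    simp only []
    rw [if_pos hkK]
    have h1mt : 1 - lam/2 = (2 - lam)/2 := by ring
    have hpow : (2:ℝ)^k * (2:ℝ)^(K-k) = 2^K := by
      rw [← pow_add]; congr 1; omega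
    have e1 : θ k * (lam/2)^k * ((2 - lam)/2)^(K-k)
        = θ k * lam^k * (2-lam)^(K-k) / ((2:ℝ)^k * (2:ℝ)^(K-k)) := by
      rw [div_pow, div_pow]; ring
    have e2 : θ k / (K.choose k : ℝ) * ((2:ℝ)^K)⁻¹ * (K.choose k : ℝ) * (2-lam)^(K-k) * lam^k
        = θ k * lam^k * (2-lam)^(K-k) / (2:ℝ)^K := by
      field_simp
    rw [h1mt, e1, hpow, e2]
end

section
/- Let L be an n×n real symmetric positive semidefinite matrix, let t ≥ 0, and let x ∈ ℝⁿ. Then the matrix exp(t·L) − I is positive semidefinite, and z* := exp(−t·L)·x is a minimizer of the objective f(z) = (1/2)·zᵀ(exp(t·L) − I)z + (1/2)·‖z − x‖²; that is, f(exp(−t·L)·x) ≤ f(z) for all z ∈ ℝⁿ. -/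
open Matrix Finset

open NormedSpace in
private lemma quad_exp_ge {n : ℕ} (M : Matrix (Fin n) (Fin n) ℝ) (hM : M.PosSemidef)
    (z : Fin n → ℝ) : z ⬝ᵥ z ≤ z ⬝ᵥ (exp M *ᵥ z) := by
  letI : NormedRing (Matrix (Fin n) (Fin n) ℝ) := Matrix.linftyOpNormedRing
  letI : NormedAlgebra ℝ (Matrix (Fin n) (Fin n) ℝ) := Matrix.linftyOpNormedAlgebra
  have hsum : Summable (fun k : ℕ => ((Nat.factorial k : ℝ))⁻¹ • M ^ k) := expSeries_summable' M
  have hlin : IsLinearMap ℝ (fun B : Matrix (Fin n) (Fin n) ℝ => z ⬝ᵥ B *ᵥ z) := by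
    constructor
    · intro A B; simp [Matrix.add_mulVec, dotProduct_add]
    · intro c B; simp [Matrix.smul_mulVec, dotProduct_smul]
  let φ : Matrix (Fin n) (Fin n) ℝ →L[ℝ] ℝ :=
    LinearMap.toContinuousLinearMap (IsLinearMap.mk' _ hlin)
  have key : z ⬝ᵥ (exp M *ᵥ z) = ∑' k : ℕ, ((Nat.factorial k : ℝ))⁻¹ * (z ⬝ᵥ (M ^ k *ᵥ z)) := by
    have := φ.map_tsum hsum
    rw [exp_eq_tsum ℝ]
    simpa [φ, Matrix.smul_mulVec, smul_eq_mul] using this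
  have hnn : ∀ k : ℕ, 0 ≤ ((Nat.factorial k : ℝ))⁻¹ * (z ⬝ᵥ (M ^ k *ᵥ z)) := by
    intro k
    have := (hM.pow k).dotProduct_mulVec_nonneg z
    simp only [star_trivial] at this
    positivity
  have hsum2 : Summable (fun k : ℕ => ((Nat.factorial k : ℝ))⁻¹ * (z ⬝ᵥ (M ^ k *ᵥ z))) := by
    have hc := hsum.map φ.toLinearMap.toAddMonoidHom φ.continuous
    have he : (fun k : ℕ => ((Nat.factorial k : ℝ))⁻¹ * (z ⬝ᵥ (M ^ k *ᵥ z)))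
        = (⇑φ ∘ fun k : ℕ => ((Nat.factorial k : ℝ))⁻¹ • M ^ k) := by
      funext k
      simp [φ, Matrix.smul_mulVec, smul_eq_mul]
    rw [he]
    exact hc
  have h0 : z ⬝ᵥ z = ((Nat.factorial 0 : ℝ))⁻¹ * (z ⬝ᵥ (M ^ 0 *ᵥ z)) := by
    simp [Matrix.one_mulVec]
  rw [key, h0]
  exact hsum2.le_tsum 0 (fun k _ => hnn k)

/-- Heat-kernel energy: if `L` is real symmetric positive semidefinite and `t ≥ 0`, then
`exp(tL) - I` is positive semidefinite and `z* = exp(-tL)·x` minimizes the objective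
`f(z) = (1/2)·zᵀ(exp(tL) - I)z + (1/2)·‖z-x‖²` (Euclidean norm: `‖v‖² = ∑ i, (v i)²`). -/
theorem heat_kernel_graph_optimization_minimizer
    {n : ℕ} (L : Matrix (Fin n) (Fin n) ℝ)
    (hL : L.PosSemidef) (t : ℝ) (ht : 0 ≤ t) (x : Fin n → ℝ)
    (f : (Fin n → ℝ) → ℝ)
    (hf : ∀ z, f z = (1 / 2) * (z ⬝ᵥ (NormedSpace.exp (t • L) - 1) *ᵥ z)
        + (1 / 2) * ∑ i, (z i - x i) ^ 2) :
    (NormedSpace.exp (t • L) - (1 : Matrix (Fin n) (Fin n) ℝ)).PosSemidef ∧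
    ∀ z : Fin n → ℝ, f (NormedSpace.exp ((-t) • L) *ᵥ x) ≤ f z := by
  have htL : (t • L).PosSemidef := by
    refine .of_dotProduct_mulVec_nonneg ?_ ?_
    · show (t • L)ᴴ = t • L
      rw [Matrix.conjTranspose_smul, hL.1.eq]
      simp
    · intro v
      have := hL.dotProduct_mulVec_nonneg v
      simp only [star_trivial] at this ⊢
      rw [Matrix.smul_mulVec, dotProduct_smul]
      exact mul_nonneg ht this
  set A := NormedSpace.exp (t • L) with hA
  have hAherm : A.IsHermitian := htL.1.exp
  have hApsd : ∀ w : Fin n → ℝ, 0 ≤ w ⬝ᵥ A *ᵥ w := by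
    intro w
    refine le_trans ?_ (quad_exp_ge _ htL w)
    exact Finset.sum_nonneg fun i _ => mul_self_nonneg _
  have hsub : (A - 1).PosSemidef := by
    refine .of_dotProduct_mulVec_nonneg (hAherm.sub (Matrix.isHermitian_one)) fun v => ?_
    have := quad_exp_ge _ htL v
    simp only [star_trivial, Matrix.sub_mulVec, dotProduct_sub, Matrix.one_mulVec]
    linarith
  refine ⟨hsub, fun z => ?_⟩
  set zs : Fin n → ℝ := NormedSpace.exp ((-t) • L) *ᵥ x with hzs
  have hinv : A * NormedSpace.exp ((-t) • L) = 1 := by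
    rw [hA, ← Matrix.exp_add_of_commute]
    · rw [← add_smul]
      simp [NormedSpace.exp_zero]
    · exact (Commute.refl L).smul_left t |>.smul_right (-t)
  have hAz : A *ᵥ zs = x := by
    rw [hzs, Matrix.mulVec_mulVec, hinv, Matrix.one_mulVec]
  -- symmetry
  have hAT : Aᵀ = A := by
    have := hAherm.eq
    simpa using this
  have hsym : ∀ u v : Fin n → ℝ, u ⬝ᵥ A *ᵥ v = v ⬝ᵥ A *ᵥ u := by
    intro u v
    rw [Matrix.dotProduct_mulVec, ← Matrix.mulVec_transpose, hAT, dotProduct_comm]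
  -- rewrite f
  have hfq : ∀ w : Fin n → ℝ, f w = (1/2) * (w ⬝ᵥ A *ᵥ w) - w ⬝ᵥ x + (1/2) * (x ⬝ᵥ x) := by
    intro w
    rw [hf w]
    have h1 : w ⬝ᵥ (A - 1) *ᵥ w = w ⬝ᵥ A *ᵥ w - w ⬝ᵥ w := by
      rw [Matrix.sub_mulVec, dotProduct_sub, Matrix.one_mulVec]
    have h2 : ∑ i, (w i - x i) ^ 2 = w ⬝ᵥ w - 2 * (w ⬝ᵥ x) + x ⬝ᵥ x := by
      simp only [dotProduct, Finset.mul_sum, ← Finset.sum_add_distrib, ← Finset.sum_sub_distrib]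
      exact Finset.sum_congr rfl fun i _ => by ring
    rw [h1, h2]; ring
  have hw : (z - zs) ⬝ᵥ A *ᵥ (z - zs)
      = z ⬝ᵥ A *ᵥ z - z ⬝ᵥ A *ᵥ zs - zs ⬝ᵥ A *ᵥ z + zs ⬝ᵥ A *ᵥ zs := by
    simp only [Matrix.mulVec_sub, sub_dotProduct, dotProduct_sub]
    ring
  have hwpos : 0 ≤ (z - zs) ⬝ᵥ A *ᵥ (z - zs) := hApsd _
  have e1 : z ⬝ᵥ x = z ⬝ᵥ A *ᵥ zs := by rw [hAz]
  have e2 : zs ⬝ᵥ x = zs ⬝ᵥ A *ᵥ zs := by rw [hAz]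
  have e3 : zs ⬝ᵥ A *ᵥ z = z ⬝ᵥ A *ᵥ zs := hsym zs z
  rw [hfq z, hfq zs]
  linarith
end
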